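/- Let m > 1, σ ≥ 0, N real, and let f : I → (0,∞) be a positive function on an open interval I ⊂ (0,∞) such that ξ ↦ f(ξ)^m is twice differentiable on I and f satisfies the profile ODE on I. Define x(ξ) = ξ² f(ξ)^{1−m}/(m(m−1)), y(ξ) = ξ f'(ξ)/f(ξ), z(ξ) = ξ^{σ+2}/m. Then for all ξ ∈ I: ξ·x'(ξ) = x(ξ)·(2 − (m−1)y(ξ)), ξ·y'(ξ) = −m·y(ξ)² − (N−2)y(ξ) + x(ξ) − z(ξ), and ξ·z'(ξ) = (σ+2)·z(ξ). -/

import Mathlib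

open Set

/-- the variables `x = ξ²f^{1-m}/(m(m-1))`, `y = ξf'/f`,
`z = ξ^{σ+2}/m` transform the profile ODE into the autonomous system
`ẋ = x(2-(m-1)y)`, `ẏ = -my² - (N-2)y + x - z`, `ż = (σ+2)z` with respect to
the independent variable `η` given by `d/dη = ξ d/dξ`. -/
theorem second_phase_space_transformation
    (m σ N : ℝ) (hm : 1 < m) (hσ : 0 ≤ σ)
    (a b : ℝ) (hI : Ioo a b ⊆ Ioi (0:ℝ))
    (f : ℝ → ℝ) (hf : ∀ ξ ∈ Ioo a b, 0 < f ξ)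
    (hd1 : ∀ ξ ∈ Ioo a b, DifferentiableAt ℝ (fun t => f t ^ m) ξ)
    (hd2 : ∀ ξ ∈ Ioo a b, DifferentiableAt ℝ (deriv fun t => f t ^ m) ξ)
    (hode : ∀ ξ ∈ Ioo a b,
      deriv (deriv fun t => f t ^ m) ξ + ((N - 1) / ξ) * deriv (fun t => f t ^ m) ξ
        - f ξ / (m - 1) + ξ ^ σ * f ξ ^ m = 0)
    (x y z : ℝ → ℝ)
    (hx : ∀ ξ : ℝ, x ξ = ξ ^ 2 * f ξ ^ (1 - m) / (m * (m - 1)))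
    (hy : ∀ ξ : ℝ, y ξ = ξ * deriv f ξ / f ξ)
    (hz : ∀ ξ : ℝ, z ξ = ξ ^ (σ + 2) / m) :
    ∀ ξ ∈ Ioo a b,
      ξ * deriv x ξ = x ξ * (2 - (m - 1) * y ξ) ∧
      ξ * deriv y ξ = -(m * y ξ ^ 2) - (N - 2) * y ξ + x ξ - z ξ ∧
      ξ * deriv z ξ = (σ + 2) * z ξ := by
  have hm0 : m ≠ 0 := by linarith
  have hm1 : m - 1 ≠ 0 := by linarith
  set g : ℝ → ℝ := fun t => f t ^ m with hg
  -- derivative of f on the interval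
  have hfd : ∀ t ∈ Ioo a b, HasDerivAt f (deriv g t * f t ^ (1 - m) / m) t := by
    intro t ht
    have hFt : 0 < f t := hf t ht
    have hgt : g t ≠ 0 := (Real.rpow_pos_of_pos hFt m).ne'
    have hgd : HasDerivAt g (deriv g t) t := (hd1 t ht).hasDerivAt
    have h1 : HasDerivAt (fun s => g s ^ (1 / m))
        (deriv g t * (1 / m) * g t ^ (1 / m - 1)) t := hgd.rpow_const (Or.inl hgt)
    have heq : f =ᶠ[nhds t] fun s => g s ^ (1 / m) := by
      filter_upwards [isOpen_Ioo.mem_nhds ht] with s hs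
      have hs0 : 0 < f s := hf s hs
      simp only [hg]
      rw [← Real.rpow_mul hs0.le, mul_one_div, div_self hm0, Real.rpow_one]
    have h2 : g t ^ (1 / m - 1) = f t ^ (1 - m) := by
      simp only [hg]
      rw [← Real.rpow_mul hFt.le]
      congr 1
      field_simp
    have h3 := h1.congr_of_eventuallyEq heq
    rw [h2] at h3
    rw [show deriv g t * f t ^ (1 - m) / m = deriv g t * (1 / m) * f t ^ (1 - m) by ring]
    exact h3
  intro ξ hξI
  have hξ : 0 < ξ := hI hξI
  have hF : 0 < f ξ := hf ξ hξI
  have hP : 0 < f ξ ^ m := Real.rpow_pos_of_pos hF m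
  have hArel : f ξ ^ (1 - m) = f ξ / f ξ ^ m := by
    rw [eq_div_iff hP.ne', ← Real.rpow_add hF]
    norm_num
  have hdf : deriv f ξ = deriv g ξ * f ξ ^ (1 - m) / m := (hfd ξ hξI).deriv
  refine ⟨?_, ?_, ?_⟩
  · -- x equation
    have hxf : x = fun t => t ^ 2 * f t ^ (1 - m) / (m * (m - 1)) := funext hx
    have hfd' : HasDerivAt (fun t => f t ^ (1 - m))
        ((deriv g ξ * f ξ ^ (1 - m) / m) * (1 - m) * f ξ ^ (1 - m - 1)) ξ :=
      (hfd ξ hξI).rpow_const (Or.inl hF.ne')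
    have hX : HasDerivAt (fun t => t ^ 2 * f t ^ (1 - m) / (m * (m - 1)))
        ((2 * ξ ^ 1 * f ξ ^ (1 - m)
          + ξ ^ 2 * ((deriv g ξ * f ξ ^ (1 - m) / m) * (1 - m) * f ξ ^ (1 - m - 1)))
          / (m * (m - 1))) ξ := ((hasDerivAt_pow 2 ξ).mul hfd').div_const _
    rw [hxf, hX.deriv]
    beta_reduce
    rw [hy, hdf]
    have hB : f ξ ^ (1 - m - 1) = f ξ ^ (1 - m) / f ξ := by
      rw [eq_div_iff hF.ne', ← Real.rpow_add_one hF.ne']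
      congr 1
      ring
    rw [hB]
    field_simp
    ring
  · -- y equation
    have hrep : ∀ t ∈ Ioo a b, y t = t * deriv g t / (m * g t) := by
      intro t ht
      have hFt : 0 < f t := hf t ht
      have hPt : 0 < f t ^ m := Real.rpow_pos_of_pos hFt m
      have hAt : f t ^ (1 - m) = f t / f t ^ m := by
        rw [eq_div_iff hPt.ne', ← Real.rpow_add hFt]
        norm_num
      rw [hy, (hfd t ht).deriv, hAt]
      simp only [hg]
      field_simp
    have heq : y =ᶠ[nhds ξ] fun t => t * deriv g t / (m * g t) := by
      filter_upwards [isOpen_Ioo.mem_nhds hξI] with s hs using hrep s hs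
    have hu : HasDerivAt (fun t => t * deriv g t)
        (1 * deriv g ξ + ξ * deriv (deriv g) ξ) ξ :=
      (hasDerivAt_id ξ).mul (hd2 ξ hξI).hasDerivAt
    have hv : HasDerivAt (fun t => m * g t) (m * deriv g ξ) ξ :=
      ((hd1 ξ hξI).hasDerivAt).const_mul m
    have hvne : m * g ξ ≠ 0 := by
      simp only [hg]
      exact mul_ne_zero hm0 hP.ne'
    have hY : HasDerivAt (fun t => t * deriv g t / (m * g t))
        (((1 * deriv g ξ + ξ * deriv (deriv g) ξ) * (m * g ξ)
          - ξ * deriv g ξ * (m * deriv g ξ)) / (m * g ξ) ^ 2) ξ := hu.div hv hvne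
    have hdy : deriv y ξ = ((1 * deriv g ξ + ξ * deriv (deriv g) ξ) * (m * g ξ)
          - ξ * deriv g ξ * (m * deriv g ξ)) / (m * g ξ) ^ 2 := by
      rw [heq.deriv_eq, hY.deriv]
    have hODE := hode ξ hξI
    have hG'' : deriv (deriv g) ξ
        = f ξ / (m - 1) - ξ ^ σ * f ξ ^ m - (N - 1) / ξ * deriv g ξ := by
      simp only [hg] at *
      linarith
    have hZrel : ξ ^ (σ + 2) = ξ ^ σ * ξ ^ 2 := by
      rw [Real.rpow_add hξ]
      norm_num
    rw [hdy, hG'', hrep ξ hξI, hx, hz, hArel, hZrel]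
    simp only [hg]
    field_simp
    ring
  · -- z equation
    have hzf : z = fun t => t ^ (σ + 2) / m := funext hz
    have hZ : HasDerivAt (fun t : ℝ => t ^ (σ + 2) / m)
        ((σ + 2) * ξ ^ (σ + 2 - 1) / m) ξ :=
      (Real.hasDerivAt_rpow_const (Or.inl hξ.ne')).div_const m
    rw [hzf, hZ.deriv]
    beta_reduce
    have h1 : σ + 2 - 1 = σ + 1 := by ring
    have h2 : ξ ^ (σ + 2) = ξ ^ (σ + 1) * ξ := by
      rw [← Real.rpow_add_one hξ.ne']
      ring_nf
    rw [h1, h2]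
    ring
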